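/- Let n ≥ 1 and let a : Fin n → Fin n → Fin n → ℂ (written a^k_{ij}, with superscript the first argument). Define vectors Q^i_j ∈ ℂ^n by (Q^i_j)_k = a^i_{kj}. Then the following two conditions hold simultaneously: (A) for all i, p, j: Σ_k a^k_{ij} · conj(a^k_{pj}) = δ_{ip}, and (B) for all k, i, p: Σ_j a^k_{ij} · conj(a^k_{pj}) = δ_{ip}, if and only if the n × n array Q = ((Q^i_j)) is a quantum Latin square, i.e., for every fixed j the family (Q^i_j)_{i} is an orthonormal basis of ℂ^n and for every fixed i the family (Q^i_j)_{j} is an orthonormal basis of ℂ^n. -/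

import Mathlib

open scoped ComplexConjugate
open Matrix

/-- A family of `n` vectors in `ℂ^n` is an orthonormal basis. -/
def IsOrthonormalBasisFamily (n : ℕ) (v : Fin n → EuclideanSpace ℂ (Fin n)) : Prop :=
  ∃ b : OrthonormalBasis (Fin n) ℂ (EuclideanSpace ℂ (Fin n)), ⇑b = v

lemma onbFam_iff {n : ℕ} (hn : 1 ≤ n) (v : Fin n → EuclideanSpace ℂ (Fin n)) :
    (∃ b : OrthonormalBasis (Fin n) ℂ (EuclideanSpace ℂ (Fin n)), ⇑b = v) ↔
      Orthonormal ℂ v := by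
  constructor
  · rintro ⟨b, rfl⟩; exact b.orthonormal
  · intro hv
    have : Nonempty (Fin n) := ⟨⟨0, hn⟩⟩
    have card_eq : Fintype.card (Fin n) = Module.finrank ℂ (EuclideanSpace ℂ (Fin n)) := by
      simp
    let b := basisOfOrthonormalOfCardEqFinrank hv card_eq
    have hb : ⇑b = v := coe_basisOfOrthonormalOfCardEqFinrank hv card_eq
    refine ⟨b.toOrthonormalBasis (by rwa [hb]), ?_⟩
    rw [Module.Basis.coe_toOrthonormalBasis, hb]

lemma matrix_key {n : ℕ} (M : Matrix (Fin n) (Fin n) ℂ) :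
    (∀ i p, ∑ k, M k i * conj (M k p) = if i = p then 1 else 0) ↔
    (∀ i p, ∑ k, conj (M i k) * M p k = if i = p then 1 else 0) := by
  have h1 : (∀ i p, ∑ k, M k i * conj (M k p) = if i = p then 1 else 0) ↔
      Mᵀ * M.map (starRingEnd ℂ) = 1 := by
    constructor
    · intro h; ext i p
      rw [Matrix.mul_apply, Matrix.one_apply]
      simpa [Matrix.transpose_apply, Matrix.map_apply] using h i p
    · intro h i p
      have := congrFun (congrFun h i) p
      rw [Matrix.mul_apply, Matrix.one_apply] at this
      simpa [Matrix.transpose_apply, Matrix.map_apply] using this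
  have h2 : (∀ i p, ∑ k, conj (M i k) * M p k = if i = p then 1 else 0) ↔
      M.map (starRingEnd ℂ) * Mᵀ = 1 := by
    constructor
    · intro h; ext i p
      rw [Matrix.mul_apply, Matrix.one_apply]
      simpa [Matrix.transpose_apply, Matrix.map_apply] using h i p
    · intro h i p
      have := congrFun (congrFun h i) p
      rw [Matrix.mul_apply, Matrix.one_apply] at this
      simpa [Matrix.transpose_apply, Matrix.map_apply] using this
  rw [h1, h2, mul_eq_one_comm]

/-- for `a : Fin n → Fin n → Fin n → ℂ` (written `a^k_{ij} = a k i j`,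
superscript first), with vectors `Q^i_j ∈ ℂ^n` given by `(Q^i_j)_k = a^i_{kj}`,
the conditions (A) `∀ i p j, Σ_k a^k_{ij} conj(a^k_{pj}) = δ_{ip}` and
(B) `∀ k i p, Σ_j a^k_{ij} conj(a^k_{pj}) = δ_{ip}` hold simultaneously iff
`Q` is a quantum Latin square (each row and each column of `Q` is an orthonormal
basis of `ℂ^n`). -/
theorem stmt_1 (n : ℕ) (hn : 1 ≤ n) (a : Fin n → Fin n → Fin n → ℂ)
    (Q : Fin n → Fin n → EuclideanSpace ℂ (Fin n))
    (hQ : ∀ i j k, Q i j k = a i k j) :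
    ((∀ i p j, ∑ k, a k i j * (starRingEnd ℂ) (a k p j) =
        if i = p then 1 else 0) ∧
     (∀ k i p, ∑ j, a k i j * (starRingEnd ℂ) (a k p j) =
        if i = p then 1 else 0)) ↔
    ((∀ j, IsOrthonormalBasisFamily n (fun i => Q i j)) ∧
     (∀ i, IsOrthonormalBasisFamily n (fun j => Q i j))) := by
  simp only [IsOrthonormalBasisFamily, onbFam_iff hn, orthonormal_iff_ite,
    PiLp.inner_apply, RCLike.inner_apply', hQ]
  refine and_congr ?_ ?_
  · constructor
    · intro h j
      exact (matrix_key (fun k i => a k i j)).mp (fun i p => h i p j)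
    · intro h i p j
      exact (matrix_key (fun k i => a k i j)).mpr (h j) i p
  · constructor
    · intro h i t t'
      exact (matrix_key (fun m t => a i t m)).mp (h i) t t'
    · intro h k t t'
      exact (matrix_key (fun m t => a k t m)).mpr (h k) t t'
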